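/- Let d ≥ 2 and let 𝒳 be a hermiticity-preserving linear map on d×d complex matrices. Let P(𝒳) denote the orthogonal projection of 𝒳 onto the linear span of the unital trace-preserving hermiticity-preserving maps, with respect to the inner product (𝒳,𝒴) = (1/d²)Tr(𝒳†𝒴). Then ‖𝒳 − P(𝒳)‖² = (1/d³)·( ‖𝒳(I)‖_F² + ‖𝒳†(I)‖_F² − (2/d)·Tr(𝒳(I))² ). -/

import Mathlib

/- STATEMENT 19: For a hermiticity-preserving linear map 𝒳 on d×d matrices with
Hilbert–Schmidt adjoint 𝒳†, and P(𝒳) the orthogonal projection of 𝒳 onto the (real)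
linear span of the unital trace-preserving maps — w.r.t. (𝒳,𝒴) = (1/d²)Tr(𝒳†𝒴) —
one has ‖𝒳 − P(𝒳)‖² = (1/d³)( ‖𝒳(I)‖_F² + ‖𝒳†(I)‖_F² − (2/d)Tr(𝒳(I))² ).
The projection P(𝒳) is characterized by membership in the span together with
orthogonality of 𝒳 − P(𝒳) to the span; the squared norms ‖M‖_F² are written as
Tr(MᴴM) and the identity is stated in ℂ. -/

open Matrix

noncomputable section

/-- The Hilbert–Schmidt trace pairing Tr[𝒴†𝒵] of two linear maps on matrices, expanded in
the orthonormal basis of standard matrix units: Tr[𝒴†𝒵] = Σ_{ij} Tr((𝒴 E_ij)ᴴ (𝒵 E_ij)). -/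
def trHS {d : ℕ} (Y Z : Matrix (Fin d) (Fin d) ℂ →ₗ[ℂ] Matrix (Fin d) (Fin d) ℂ) : ℂ :=
  ∑ i, ∑ j, ((Y (Matrix.single i j 1))ᴴ * Z (Matrix.single i j 1)).trace

/-- The inner product (𝒳,𝒴) = (1/d²)·Tr(𝒳†𝒴) on linear maps. -/
def ipMaps {d : ℕ} (Y Z : Matrix (Fin d) (Fin d) ℂ →ₗ[ℂ] Matrix (Fin d) (Fin d) ℂ) : ℂ :=
  ((d : ℂ) ^ 2)⁻¹ * trHS Y Z

/-- The set of hermiticity-preserving, unital, trace-preserving linear maps. -/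
def UTPset (d : ℕ) : Set (Matrix (Fin d) (Fin d) ℂ →ₗ[ℂ] Matrix (Fin d) (Fin d) ℂ) :=
  {Z | (∀ A, Z Aᴴ = (Z A)ᴴ) ∧ Z 1 = 1 ∧ ∀ A, (Z A).trace = A.trace}

namespace Stmt19Aux
variable {d : ℕ}

abbrev Mat (d : ℕ) := Matrix (Fin d) (Fin d) ℂ

lemma trace_mul_std (M : Mat d) (i j : Fin d) :
    (M * single i j (1:ℂ)).trace = M j i := by
  classical
  rw [Matrix.trace]
  rw [Finset.sum_eq_single j (fun b _ hb => by
    simp [Matrix.diag_apply, Matrix.mul_single_apply_of_ne (c := (1:ℂ)) i j b b hb M])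
    (by simp)]
  simp [Matrix.diag_apply]

lemma one_eq_sum_std : (1 : Mat d) = ∑ i, single i i (1:ℂ) := by
  ext a b
  simp only [Matrix.sum_apply, Matrix.single, Matrix.one_apply, Matrix.of_apply]
  rw [Finset.sum_eq_single a (fun b' _ hb => if_neg (fun h => hb h.1)) (by simp)]
  simp [eq_comm]

lemma trace_std (i j : Fin d) : (single i j (1:ℂ)).trace = if j = i then 1 else 0 := by
  rw [← one_mul (single i j (1:ℂ)), trace_mul_std, Matrix.one_apply]

lemma trace_mul_expand (Q M : Mat d) : (Q * M).trace = ∑ i, ∑ j, Q j i * M i j := by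
  rw [Matrix.trace]
  simp [Matrix.diag_apply, Matrix.mul_apply]
  exact Finset.sum_comm

lemma rsmul_mat (r : ℝ) (A : Mat d) : r • A = ((r:ℂ)) • A := by
  ext i j; simp [Complex.real_smul]

lemma rsmul_map (r : ℝ) (Y : Mat d →ₗ[ℂ] Mat d) (A : Mat d) :
    (r • Y) A = ((r:ℂ)) • Y A := by
  rw [LinearMap.smul_apply, rsmul_mat]

lemma trHS_sub_right (Y Z W : Mat d →ₗ[ℂ] Mat d) :
    trHS Y (Z - W) = trHS Y Z - trHS Y W := by
  simp [trHS, mul_sub, Matrix.trace_sub, Finset.sum_sub_distrib]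

lemma trHS_sub_left (Y Z W : Mat d →ₗ[ℂ] Mat d) :
    trHS (Y - Z) W = trHS Y W - trHS Z W := by
  simp [trHS, Matrix.conjTranspose_sub, sub_mul, Matrix.trace_sub, Finset.sum_sub_distrib]

lemma trHS_add_left (Y Z W : Mat d →ₗ[ℂ] Mat d) :
    trHS (Y + Z) W = trHS Y W + trHS Z W := by
  simp [trHS, Matrix.conjTranspose_add, add_mul, Matrix.trace_add, Finset.sum_add_distrib]

lemma trHS_zero_left (W : Mat d →ₗ[ℂ] Mat d) : trHS (0 : Mat d →ₗ[ℂ] Mat d) W = 0 := by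
  simp [trHS]

lemma trHS_rsmul_left (r : ℝ) (Y W : Mat d →ₗ[ℂ] Mat d) :
    trHS (r • Y) W = (r : ℂ) * trHS Y W := by
  simp only [trHS, rsmul_map, Matrix.conjTranspose_smul, smul_mul_assoc, Matrix.trace_smul,
    smul_eq_mul, Complex.star_def, Complex.conj_ofReal, Finset.mul_sum]

/-- The residual map `A ↦ Tr(A)•P + Tr(QA)•1`. -/
def Dmap (P Q : Mat d) : Mat d →ₗ[ℂ] Mat d where
  toFun A := A.trace • P + (Q * A).trace • (1 : Mat d)
  map_add' A B := by
    simp only [Matrix.trace_add, mul_add, add_smul]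
    abel
  map_smul' c A := by
    simp only [Matrix.trace_smul, mul_smul_comm, smul_smul, smul_add, RingHom.id_apply,
      smul_eq_mul]

lemma Dmap_apply (P Q : Mat d) (A : Mat d) :
    Dmap P Q A = A.trace • P + (Q * A).trace • (1 : Mat d) := rfl

lemma trHS_Dmap (Y : Mat d →ₗ[ℂ] Mat d) (P Q : Mat d) :
    trHS Y (Dmap P Q) = ((Y 1)ᴴ * P).trace
      + ∑ i, ∑ j, Q j i * star ((Y (single i j 1)).trace) := by
  have hterm : ∀ i j : Fin d,
      ((Y (single i j 1))ᴴ * Dmap P Q (single i j 1)).trace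
        = (single i j (1:ℂ)).trace * ((Y (single i j 1))ᴴ * P).trace
          + Q j i * star ((Y (single i j 1)).trace) := by
    intro i j
    rw [Dmap_apply, trace_mul_std, mul_add, Matrix.mul_smul, Matrix.mul_smul,
      Matrix.trace_add, Matrix.trace_smul, Matrix.trace_smul, smul_eq_mul, smul_eq_mul,
      mul_one, Matrix.trace_conjTranspose]
  rw [trHS]
  simp only [hterm, Finset.sum_add_distrib]
  congr 1
  have h1 : ∀ i : Fin d, ∑ j, (single i j (1:ℂ)).trace
      * ((Y (single i j 1))ᴴ * P).trace
      = ((Y (single i i 1))ᴴ * P).trace := by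
    intro i
    rw [Finset.sum_eq_single i (fun b _ hb => by rw [trace_std, if_neg hb, zero_mul]) (by simp)]
    rw [trace_std, if_pos rfl, one_mul]
  rw [Finset.sum_congr rfl (fun i _ => h1 i)]
  rw [one_eq_sum_std, map_sum, Matrix.conjTranspose_sum, Finset.sum_mul, Matrix.trace_sum]

end Stmt19Aux

open Stmt19Aux

theorem stmt19 (d : ℕ) (hd : 2 ≤ d)
    (X : Matrix (Fin d) (Fin d) ℂ →ₗ[ℂ] Matrix (Fin d) (Fin d) ℂ)
    (hherm : ∀ A, X Aᴴ = (X A)ᴴ)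
    -- Xd is the adjoint 𝒳† of 𝒳 w.r.t. the Hilbert–Schmidt inner product on matrices
    (Xd : Matrix (Fin d) (Fin d) ℂ →ₗ[ℂ] Matrix (Fin d) (Fin d) ℂ)
    (hXd : ∀ A B : Matrix (Fin d) (Fin d) ℂ, ((Xd A)ᴴ * B).trace = (Aᴴ * X B).trace)
    -- PX is the orthogonal projection of 𝒳 onto the span of unital trace-preserving maps
    (PX : Matrix (Fin d) (Fin d) ℂ →ₗ[ℂ] Matrix (Fin d) (Fin d) ℂ)
    (hmem : PX ∈ Submodule.span ℝ (UTPset d))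
    (horth : ∀ Z ∈ Submodule.span ℝ (UTPset d), ipMaps (X - PX) Z = 0) :
    ipMaps (X - PX) (X - PX)
      = ((d : ℂ) ^ 3)⁻¹ *
          ( ((X 1)ᴴ * X 1).trace + ((Xd 1)ᴴ * Xd 1).trace
            - 2 * (d : ℂ)⁻¹ * ((X 1).trace) ^ 2 ) := by
  classical
  have hd1 : (d : ℂ) ≠ 0 := by
    exact_mod_cast Nat.cast_ne_zero.mpr (by omega)
  have hcard : ((Fintype.card (Fin d) : ℂ)) = (d : ℂ) := by simp
  set τ : ℂ := (X 1).trace with hτdef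
  set t : ℂ := τ / d with htdef
  -- basic hermiticity facts
  have hX1herm : (X 1)ᴴ = X 1 := by
    rw [← hherm 1, Matrix.conjTranspose_one]
  have hτreal : star τ = τ := by
    rw [hτdef, ← Matrix.trace_conjTranspose, hX1herm]
  have htreal : star t = t := by
    rw [htdef, star_div₀, hτreal, star_natCast]
  have hXtrace : ∀ B, (X B).trace = ((Xd 1)ᴴ * B).trace := by
    intro B
    rw [hXd 1 B, Matrix.conjTranspose_one, one_mul]
  have hkey : ∀ B, ((Xd 1) * B).trace = ((Xd 1)ᴴ * B).trace := by
    intro B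
    calc ((Xd 1) * B).trace = star (star (((Xd 1) * B).trace)) := (star_star _).symm
      _ = star ((((Xd 1) * B)ᴴ).trace) := by rw [Matrix.trace_conjTranspose]
      _ = star ((Bᴴ * (Xd 1)ᴴ).trace) := by rw [Matrix.conjTranspose_mul]
      _ = star (((Xd 1)ᴴ * Bᴴ).trace) := by rw [Matrix.trace_mul_comm]
      _ = star ((X Bᴴ).trace) := by rw [← hXtrace Bᴴ]
      _ = star (((X B)ᴴ).trace) := by rw [hherm]
      _ = (X B).trace := by rw [Matrix.trace_conjTranspose, star_star]
      _ = ((Xd 1)ᴴ * B).trace := hXtrace B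
  have hXd1herm : (Xd 1)ᴴ = Xd 1 := by
    ext a b
    have e1 := (trace_mul_std (Xd 1)ᴴ b a).symm
    have e2 := (trace_mul_std (Xd 1) b a).symm
    rw [e1, e2, hkey]
  have hτXd : (Xd 1).trace = τ := by
    have h := hkey 1
    rw [← hXtrace 1, mul_one] at h
    exact h
  -- the residual map
  set P : Mat d := (d : ℂ)⁻¹ • (X 1 - t • 1) with hPdef
  set Q : Mat d := (d : ℂ)⁻¹ • (Xd 1 - t • 1) with hQdef
  have hstar_dinv : star ((d:ℂ)⁻¹) = (d:ℂ)⁻¹ := by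
    rw [star_inv₀, star_natCast]
  have hPherm : Pᴴ = P := by
    rw [hPdef, Matrix.conjTranspose_smul, Matrix.conjTranspose_sub, Matrix.conjTranspose_smul,
      hX1herm, Matrix.conjTranspose_one, htreal, hstar_dinv]
  have hQherm : Qᴴ = Q := by
    rw [hQdef, Matrix.conjTranspose_smul, Matrix.conjTranspose_sub, Matrix.conjTranspose_smul,
      hXd1herm, Matrix.conjTranspose_one, htreal, hstar_dinv]
  have htd : t * (d : ℂ) = τ := div_mul_cancel₀ τ hd1
  have hTrP : P.trace = 0 := by
    rw [hPdef, Matrix.trace_smul, Matrix.trace_sub, Matrix.trace_smul, Matrix.trace_one,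
      hcard, smul_eq_mul, smul_eq_mul, htd, ← hτdef, sub_self, mul_zero]
  have hTrQ : Q.trace = 0 := by
    rw [hQdef, Matrix.trace_smul, Matrix.trace_sub, Matrix.trace_smul, Matrix.trace_one,
      hcard, smul_eq_mul, smul_eq_mul, htd, hτXd, sub_self, mul_zero]
  have hDelta1 : Dmap P Q 1 = X 1 - t • 1 := by
    rw [Dmap_apply, mul_one, Matrix.trace_one, hcard, hTrQ, zero_smul, add_zero, hPdef,
      smul_smul, mul_inv_cancel₀ hd1, one_smul]
  have hQA : ∀ A, (Q * A).trace = (d:ℂ)⁻¹ * ((X A).trace - t * A.trace) := by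
    intro A
    rw [hQdef, Matrix.smul_mul, Matrix.trace_smul, smul_eq_mul, Matrix.sub_mul,
      Matrix.smul_mul, one_mul, Matrix.trace_sub, Matrix.trace_smul, smul_eq_mul,
      hkey A, ← hXtrace A]
  have hDeltaTr : ∀ A, (Dmap P Q A).trace = (X A).trace - t * A.trace := by
    intro A
    rw [Dmap_apply, Matrix.trace_add, Matrix.trace_smul A.trace P, hTrP, smul_zero, zero_add,
      Matrix.trace_smul ((Q * A).trace) (1 : Mat d), Matrix.trace_one, hcard, smul_eq_mul,
      hQA A, mul_comm, ← mul_assoc, mul_inv_cancel₀ hd1, one_mul]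
  have hDherm : ∀ A, Dmap P Q Aᴴ = (Dmap P Q A)ᴴ := by
    intro A
    rw [Dmap_apply, Dmap_apply, Matrix.conjTranspose_add,
      Matrix.conjTranspose_smul A.trace P, Matrix.conjTranspose_smul ((Q * A).trace) (1 : Mat d),
      Matrix.conjTranspose_one, hPherm]
    congr 1
    · rw [Matrix.trace_conjTranspose]
    · congr 1
      calc (Q * Aᴴ).trace = ((A * Qᴴ)ᴴ).trace := by
            rw [Matrix.conjTranspose_mul, Matrix.conjTranspose_conjTranspose]
        _ = star ((A * Qᴴ).trace) := Matrix.trace_conjTranspose _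
        _ = star ((A * Q).trace) := by rw [hQherm]
        _ = star ((Q * A).trace) := by rw [Matrix.trace_mul_comm]
  -- Dmap P Q is orthogonal to the span
  have hbase : ∀ Z ∈ UTPset d, trHS Z (Dmap P Q) = 0 := by
    intro Z hZ
    obtain ⟨hZh, hZ1, hZtr⟩ := hZ
    rw [trHS_Dmap, hZ1, Matrix.conjTranspose_one, one_mul, hTrP, zero_add]
    have hterm : ∀ i j : Fin d, Q j i * star ((Z (single i j 1)).trace)
        = if j = i then Q j i else 0 := by
      intro i j
      rw [hZtr, trace_std]
      split <;> simp
    simp only [hterm, Finset.sum_ite_eq', Finset.mem_univ, if_true]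
    have hdiag : ∑ i, Q i i = Q.trace := rfl
    rw [hdiag]
    exact hTrQ
  have hspanorth : ∀ Z ∈ Submodule.span ℝ (UTPset d), trHS Z (Dmap P Q) = 0 := by
    intro Z hZ
    exact Submodule.span_induction (fun x hx => hbase x hx) (trHS_zero_left _)
      (fun x y _ _ hx hy => by rw [trHS_add_left, hx, hy, add_zero])
      (fun r x _ hx => by rw [trHS_rsmul_left, hx, mul_zero]) hZ
  -- X - Dmap P Q lies in the span
  have hs : ((t.re : ℝ) : ℂ) = t := Complex.conj_eq_iff_re.mp htreal
  set s : ℝ := t.re with hsdef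
  set W : Mat d →ₗ[ℂ] Mat d := X - Dmap P Q + ((1 - s : ℝ)) • LinearMap.id with hWdef
  have hWapp : ∀ A, W A = X A - Dmap P Q A + ((1 - (s:ℂ))) • A := by
    intro A
    rw [hWdef, LinearMap.add_apply, LinearMap.sub_apply, rsmul_map, LinearMap.id_apply]
    push_cast
    ring_nf
  have hWmem : W ∈ UTPset d := by
    refine ⟨?_, ?_, ?_⟩
    · intro A
      rw [hWapp, hWapp, hherm, hDherm, Matrix.conjTranspose_add, Matrix.conjTranspose_sub,
        Matrix.conjTranspose_smul]
      congr 1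
      simp [Complex.star_def, map_sub, Complex.conj_ofReal]
    · rw [hWapp, hDelta1, sub_sub_cancel, ← add_smul, hs]
      rw [show t + (1 - t) = 1 by ring, one_smul]
    · intro A
      rw [hWapp, Matrix.trace_add, Matrix.trace_sub, hDeltaTr, Matrix.trace_smul, smul_eq_mul,
        hs]
      ring
  have hid : LinearMap.id ∈ UTPset d := ⟨fun A => rfl, rfl, fun A => rfl⟩
  have hXDeq : X - Dmap P Q = W + ((s - 1 : ℝ)) • LinearMap.id := by
    rw [hWdef]
    module
  have hmemXD : X - Dmap P Q ∈ Submodule.span ℝ (UTPset d) := by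
    rw [hXDeq]
    exact Submodule.add_mem _ (Submodule.subset_span hWmem)
      (Submodule.smul_mem _ _ (Submodule.subset_span hid))
  -- clearing the normalization factor
  have hclear : ∀ Z, ipMaps (X - PX) Z = 0 → trHS (X - PX) Z = 0 := by
    intro Z h
    unfold ipMaps at h
    rcases mul_eq_zero.mp h with h' | h'
    · exact absurd h' (inv_ne_zero (pow_ne_zero _ hd1))
    · exact h'
  -- value of trHS X (Dmap P Q)
  have hXD : trHS X (Dmap P Q)
      = (d:ℂ)⁻¹ * ( ((X 1)ᴴ * X 1).trace + ((Xd 1)ᴴ * Xd 1).trace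
          - 2 * (d : ℂ)⁻¹ * τ ^ 2 ) := by
    rw [trHS_Dmap]
    have hsum : ∑ i, ∑ j, Q j i * star ((X (single i j 1)).trace)
        = (Q * Xd 1).trace := by
      rw [trace_mul_expand]
      refine Finset.sum_congr rfl fun i _ => Finset.sum_congr rfl fun j _ => ?_
      congr 1
      rw [hXtrace, trace_mul_std, Matrix.conjTranspose_apply, star_star]
    rw [hsum]
    have h1 : ((X 1)ᴴ * P).trace = (d:ℂ)⁻¹ * (((X 1)ᴴ * X 1).trace - t * τ) := by
      rw [hPdef, Matrix.mul_smul, Matrix.trace_smul, smul_eq_mul, Matrix.mul_sub,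
        Matrix.mul_smul, mul_one, Matrix.trace_sub, Matrix.trace_smul, smul_eq_mul,
        hX1herm]
    have h2 : (Q * Xd 1).trace = (d:ℂ)⁻¹ * (((Xd 1)ᴴ * Xd 1).trace - t * τ) := by
      rw [hQA (Xd 1), hXtrace (Xd 1), hτXd]
    rw [h1, h2, htdef]
    field_simp
    ring
  -- assembling
  have e0 : trHS (X - PX) PX = 0 := hclear PX (horth PX hmem)
  have e2 : trHS (X - PX) (X - Dmap P Q) = 0 := hclear _ (horth _ hmemXD)
  have e5 : trHS PX (Dmap P Q) = 0 := hspanorth PX hmem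
  have emain : trHS (X - PX) (X - PX) = trHS X (Dmap P Q) := by
    rw [trHS_sub_right, e0, sub_zero]
    have : trHS (X - PX) X - trHS (X - PX) (Dmap P Q) = 0 := by
      rw [← trHS_sub_right]; exact e2
    have hX' : trHS (X - PX) X = trHS (X - PX) (Dmap P Q) := by linear_combination this
    rw [hX', trHS_sub_left, e5, sub_zero]
  unfold ipMaps
  rw [emain, hXD]
  ring

end
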